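/- arXiv:2203.04392 — 3 statements merged into one kernel-verified Lean document; each statement's English description precedes it below -/
import Mathlib

section
/- Let A be a transitive permutation group on a set of size 6p (p prime) whose point stabilizers are {2,3}-groups, and suppose A contains a normal subgroup L of order 3 whose orbits all have size 3. Then A contains a semiregular subgroup isomorphic to Z_{3p} with exactly two orbits on the underlying set. -/
open Subgroup MulAction

private lemma aux_isCyclic_zpowers {G : Type*} [Group G] (z : G) : IsCyclic (zpowers z) := by
  refine ⟨⟨z, mem_zpowers z⟩, fun x => ?_⟩
  obtain ⟨k, hk⟩ := mem_zpowers_iff.mp x.2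
  exact mem_zpowers_iff.mpr ⟨k, by ext; simpa using hk⟩


/-- Let `A` be a transitive permutation group on a set of size `6p`
(`p ≥ 5` prime) whose point stabilizers are `{2,3}`-groups, and suppose `A` has a
normal subgroup `L` of order `3` all of whose orbits have size `3`.  Then `A`
contains a semiregular subgroup isomorphic to `ℤ_{3p}` having exactly two orbits. -/
theorem exists_semiregular_Z3p_subgroup
    {Ω : Type*} [Fintype Ω] {p : ℕ} (hp : p.Prime) (hp5 : 5 ≤ p)
    (hcard : Fintype.card Ω = 6 * p)
    (A : Subgroup (Equiv.Perm Ω))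
    (htrans : ∀ x y : Ω, ∃ a ∈ A, a x = y)
    (hstab : ∀ x : Ω, ∀ q : ℕ, q.Prime →
      q ∣ Nat.card (A ⊓ MulAction.stabilizer (Equiv.Perm Ω) x : Subgroup (Equiv.Perm Ω)) →
      q = 2 ∨ q = 3)
    (L : Subgroup (Equiv.Perm Ω)) (hLA : L ≤ A)
    (hLnormal : ∀ a ∈ A, ∀ l ∈ L, a * l * a⁻¹ ∈ L)
    (hLcard : Nat.card L = 3)
    (hLorb : ∀ x : Ω, Nat.card (MulAction.orbit L x) = 3) :
    ∃ H : Subgroup (Equiv.Perm Ω), H ≤ A ∧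
      Nonempty (H ≃* Multiplicative (ZMod (3 * p))) ∧
      (∀ h ∈ H, h ≠ 1 → ∀ x : Ω, h x ≠ x) ∧
      Nat.card (Quotient (MulAction.orbitRel H Ω)) = 2 := by
  classical
  haveI : Fact p.Prime := ⟨hp⟩
  have hp3 : p ≠ 3 := by omega
  have hΩpos : 0 < Fintype.card Ω := by rw [hcard]; omega
  obtain ⟨x0⟩ : Nonempty Ω := Fintype.card_pos_iff.mp hΩpos
  -- nontrivial elements of L fix no point
  have hLfree : ∀ l ∈ L, ∀ x : Ω, l x = x → l = 1 := by
    intro l hl x hfix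
    have hstabL : stabilizer L x = ⊥ := by
      have h1 : Nat.card L = Nat.card (L ⧸ stabilizer L x) * Nat.card (stabilizer L x) :=
        Subgroup.card_eq_card_quotient_mul_card_subgroup _
      have h2 : Nat.card (L ⧸ stabilizer L x) = 3 := by
        rw [← hLorb x]
        exact (Nat.card_congr (orbitEquivQuotientStabilizer L x)).symm
      rw [hLcard, h2] at h1
      have : Nat.card (stabilizer L x) = 1 := by omega
      exact Subgroup.eq_bot_of_card_eq _ this
    have hmem : (⟨l, hl⟩ : L) ∈ stabilizer L x := by
      simp only [mem_stabilizer_iff, Subgroup.mk_smul, Equiv.Perm.smul_def]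
      exact hfix
    rw [hstabL, Subgroup.mem_bot] at hmem
    exact congrArg Subtype.val hmem
  -- elements of A of order p fix no point
  have hAfree : ∀ g ∈ A, orderOf g = p → ∀ x : Ω, g x ≠ x := by
    intro g hg hord x hfix
    have hmem : g ∈ (A ⊓ MulAction.stabilizer (Equiv.Perm Ω) x : Subgroup (Equiv.Perm Ω)) :=
      ⟨hg, by simpa [mem_stabilizer_iff, Equiv.Perm.smul_def] using hfix⟩
    have hdvd : p ∣ Nat.card (A ⊓ MulAction.stabilizer (Equiv.Perm Ω) x : Subgroup (Equiv.Perm Ω)) := by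
      have : orderOf (⟨g, hmem⟩ : (A ⊓ MulAction.stabilizer (Equiv.Perm Ω) x : Subgroup (Equiv.Perm Ω))) = p := by
        rw [← hord]
        exact (orderOf_injective (A ⊓ MulAction.stabilizer (Equiv.Perm Ω) x).subtype Subtype.val_injective ⟨g, hmem⟩ : _).symm
      rw [← this]
      exact orderOf_dvd_natCard _
    rcases hstab x p hp hdvd with h | h <;> omega
  -- p divides the order of A
  have hpA : p ∣ Fintype.card A := by
    have horb : orbit A x0 = Set.univ := by
      ext y
      simp only [Set.mem_univ, iff_true]
      obtain ⟨a, ha, hay⟩ := htrans x0 y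
      exact ⟨⟨a, ha⟩, hay⟩
    have := MulAction.card_orbit_mul_card_stabilizer_eq_card_group A x0
    have hcardorb : Fintype.card (orbit A x0) = 6 * p := by
      rw [← hcard]
      exact Fintype.card_congr (Equiv.setCongr horb |>.trans (Equiv.Set.univ Ω))
    rw [hcardorb] at this
    exact ⟨6 * Fintype.card (stabilizer A x0), by rw [← this]; ring⟩
  -- get g of order p in A
  obtain ⟨g', hg'⟩ := exists_prime_orderOf_dvd_card p hpA
  set g : Equiv.Perm Ω := (g' : Equiv.Perm Ω) with hgdef
  have hgA : g ∈ A := g'.2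
  have hgord : orderOf g = p := by
    rw [← hg']
    exact (orderOf_injective A.subtype Subtype.val_injective g').symm ▸ rfl
  -- get l0 of order 3 in L
  haveI : Fact (Nat.Prime 3) := ⟨by norm_num⟩
  have h3L : (3:ℕ) ∣ Fintype.card L := by rw [← Nat.card_eq_fintype_card, hLcard]
  obtain ⟨l0', hl0'⟩ := exists_prime_orderOf_dvd_card 3 h3L
  set l0 : Equiv.Perm Ω := (l0' : Equiv.Perm Ω) with hl0def
  have hl0L : l0 ∈ L := l0'.2
  have hl0ord : orderOf l0 = 3 := by
    rw [← hl0']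
    exact (orderOf_injective L.subtype Subtype.val_injective l0' : _)
  have hl0ne : l0 ≠ 1 := by
    intro h; rw [h, orderOf_one] at hl0ord; omega
  have hl0ne' : l0' ≠ 1 := by
    intro h; apply hl0ne; rw [hl0def, h]; rfl
  -- every element of L is a power of l0
  have hLzpow : ∀ c ∈ L, ∃ n : ℤ, l0 ^ n = c := by
    intro c hc
    have hmem : (⟨c, hc⟩ : L) ∈ zpowers l0' := mem_zpowers_of_prime_card hLcard hl0ne'
    obtain ⟨n, hn⟩ := mem_zpowers_iff.mp hmem
    refine ⟨n, ?_⟩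
    have := congrArg (Subtype.val : L → Equiv.Perm Ω) hn
    simpa using this
  -- g commutes with l0
  have hcomm : Commute l0 g := by
    have hcL : g * l0 * g⁻¹ ∈ L := hLnormal g hgA l0 hl0L
    obtain ⟨n, hn⟩ := hLzpow _ hcL
    have hnred : l0 ^ (n % 3) = g * l0 * g⁻¹ := by
      rw [← hn]
      conv_rhs => rw [show n = 3 * (n / 3) + n % 3 from (Int.mul_ediv_add_emod n 3).symm]
      rw [zpow_add, zpow_mul]
      have h3 : l0 ^ (3:ℤ) = 1 := orderOf_dvd_iff_zpow_eq_one.mp (by rw [hl0ord]; norm_num)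
      rw [h3, one_zpow, one_mul]
    have hmod : n % 3 = 0 ∨ n % 3 = 1 ∨ n % 3 = 2 := by omega
    rcases hmod with hm | hm | hm
    · exfalso
      rw [hm, zpow_zero] at hnred
      apply hl0ne
      calc l0 = g⁻¹ * (g * l0 * g⁻¹) * g := by group
        _ = g⁻¹ * 1 * g := by rw [← hnred]
        _ = 1 := by group
    · rw [hm, zpow_one] at hnred
      show l0 * g = g * l0
      calc l0 * g = (g * l0 * g⁻¹) * g := by rw [← hnred]
        _ = g * l0 := by group
    · exfalso
      rw [hm] at hnred
      have h1 : g * l0 * g⁻¹ = l0⁻¹ := by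
        rw [← hnred]
        have h3 : l0 ^ (3:ℤ) = 1 := orderOf_dvd_iff_zpow_eq_one.mp (by rw [hl0ord]; norm_num)
        have : l0 ^ (2:ℤ) * l0 = 1 := by
          rw [show l0 ^ (2:ℤ) * l0 = l0 ^ (3:ℤ) by group]
          exact h3
        rw [eq_inv_iff_mul_eq_one]
        rw [show l0 ^ (2:ℤ) * l0 = l0 ^ (3:ℤ) by group]
        exact h3
      have h2 : g * l0⁻¹ * g⁻¹ = l0 := by
        have hthis := congrArg Inv.inv h1
        rw [inv_inv] at hthis
        calc g * l0⁻¹ * g⁻¹ = (g * l0 * g⁻¹)⁻¹ := by group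
          _ = l0 := hthis
      have h3' : g ^ 2 * l0 * (g ^ 2)⁻¹ = l0 := by
        calc g ^ 2 * l0 * (g ^ 2)⁻¹ = g * (g * l0 * g⁻¹) * g⁻¹ := by rw [pow_two]; group
          _ = g * l0⁻¹ * g⁻¹ := by rw [h1]
          _ = l0 := h2
      have hc2 : Commute (g ^ 2) l0 := by
        show g ^ 2 * l0 = l0 * g ^ 2
        calc g ^ 2 * l0 = (g ^ 2 * l0 * (g ^ 2)⁻¹) * g ^ 2 := by rw [pow_two]; group
          _ = l0 * g ^ 2 := by rw [h3']
      have hgp : (g ^ 2) ^ ((p + 1) / 2) = g := by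
        obtain ⟨m, hm'⟩ := hp.odd_of_ne_two (by omega)
        have he : (g ^ 2) ^ ((p + 1) / 2) = g ^ (p + 1) := by
          rw [← pow_mul]; congr 1; omega
        rw [he, pow_succ, ← hgord, pow_orderOf_eq_one, one_mul]
      have hcgl : Commute g l0 := by
        rw [← hgp]; exact hc2.pow_left _
      have heq : l0⁻¹ = l0 := by
        rw [← h1, hcgl.eq]
        group
      have : l0 ^ 2 = 1 := by
        rw [pow_two]
        nth_rewrite 1 [← heq]
        group
      have := orderOf_dvd_of_pow_eq_one this
      rw [hl0ord] at this
      omega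
  -- the cyclic subgroup of order 3p
  set z : Equiv.Perm Ω := l0 * g with hz
  have hcop : Nat.Coprime (orderOf l0) (orderOf g) := by
    rw [hl0ord, hgord]
    exact (Nat.coprime_primes (by norm_num) hp).mpr (fun h => hp3 h.symm)
  have hzord : orderOf z = 3 * p := by
    rw [hz, hcomm.orderOf_mul_eq_mul_orderOf_of_coprime hcop, hl0ord, hgord]
  have hzmul : ∀ m : ℤ, z ^ m = l0 ^ m * g ^ m := fun m => hcomm.mul_zpow m
  -- semiregularity
  have hsemi : ∀ h ∈ zpowers z, h ≠ 1 → ∀ x : Ω, h x ≠ x := by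
    intro h hh hne x hfix
    obtain ⟨k, hzk⟩ := mem_zpowers_iff.mp hh
    have hfixpow : ∀ m : ℕ, (h ^ m) x = x := by
      intro m
      induction m with
      | zero => simp
      | succ m ih => rw [pow_succ, Equiv.Perm.mul_apply, hfix, ih]
    -- h ^ p = l0 ^ (k * p)
    have hgK : g ^ (k * (p:ℤ)) = 1 :=
      orderOf_dvd_iff_zpow_eq_one.mp (by rw [hgord]; exact ⟨k, mul_comm _ _⟩)
    have hp1 : h ^ p = l0 ^ (k * (p:ℤ)) := by
      rw [← hzk, ← zpow_natCast (z ^ k) p, ← zpow_mul, hzmul, hgK, mul_one]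
    have hl0one : l0 ^ (k * (p:ℤ)) = 1 :=
      hLfree _ (zpow_mem hl0L _) x (by rw [← hp1]; exact hfixpow p)
    have h3k : (3:ℤ) ∣ k := by
      have hdvd : (3:ℤ) ∣ k * (p:ℤ) := by
        have := orderOf_dvd_iff_zpow_eq_one.mpr hl0one
        rwa [hl0ord] at this
      rcases (Int.prime_three.dvd_mul.mp hdvd) with h' | h'
      · exact h'
      · exfalso
        have : (3:ℕ) ∣ p := by exact_mod_cast h'
        rcases (Nat.Prime.eq_one_or_self_of_dvd hp 3 this) with h'' | h'' <;> omega
    -- h ^ 3 = g ^ (k * 3)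
    have hl0K3 : l0 ^ (k * (3:ℤ)) = 1 :=
      orderOf_dvd_iff_zpow_eq_one.mp (by rw [hl0ord]; exact ⟨k, mul_comm _ _⟩)
    have hp3' : h ^ 3 = g ^ (k * (3:ℤ)) := by
      have hz3 : h ^ 3 = z ^ (k * (3:ℤ)) := by
        rw [← hzk, ← zpow_natCast (z ^ k) 3, ← zpow_mul]
        norm_num
      rw [hz3, hzmul, hl0K3, one_mul]
    have hu1 : g ^ (k * (3:ℤ)) = 1 := by
      by_contra hne'
      have huA : g ^ (k * (3:ℤ)) ∈ A := zpow_mem hgA _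
      have hudvd : orderOf (g ^ (k * (3:ℤ))) ∣ p := by
        apply orderOf_dvd_of_pow_eq_one
        rw [← zpow_natCast (g ^ (k * (3:ℤ))) p, ← zpow_mul]
        apply orderOf_dvd_iff_zpow_eq_one.mp
        rw [hgord]
        exact ⟨k * 3, by ring⟩
      have huord : orderOf (g ^ (k * (3:ℤ))) = p := by
        rcases (Nat.Prime.eq_one_or_self_of_dvd hp _ hudvd) with h' | h'
        · exact absurd (orderOf_eq_one_iff.mp h') hne'
        · exact h'
      apply hAfree _ huA huord x
      rw [← hp3']
      exact hfixpow 3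
    have hpk : (p:ℤ) ∣ k := by
      have hdvd : (p:ℤ) ∣ k * (3:ℤ) := by
        have := orderOf_dvd_iff_zpow_eq_one.mpr hu1
        rwa [hgord] at this
      rcases ((Nat.prime_iff_prime_int.mp hp).dvd_mul.mp hdvd) with h' | h'
      · exact h'
      · exfalso
        have : p ∣ 3 := by exact_mod_cast h'
        have := Nat.le_of_dvd (by norm_num) this
        omega
    apply hne
    rw [← hzk]
    apply orderOf_dvd_iff_zpow_eq_one.mp
    rw [hzord]
    have : ((3 * p : ℕ) : ℤ) = (3:ℤ) * (p:ℤ) := by push_cast; ring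
    rw [this]
    exact (Nat.isCoprime_iff_coprime.mpr (by
      exact (Nat.coprime_primes (by norm_num) hp).mpr (fun h => hp3 h.symm))).mul_dvd h3k hpk
  -- conclusion
  refine ⟨zpowers z, zpowers_le.mpr (mul_mem (hLA hl0L) hgA), ?_, hsemi, ?_⟩
  · haveI := aux_isCyclic_zpowers z
    haveI : NeZero (3 * p) := ⟨by positivity⟩
    refine ⟨mulEquivOfCyclicCardEq ?_⟩
    rw [Nat.card_zpowers, hzord]
    simp [Nat.card_eq_fintype_card]
  · -- two orbits
    have hstabH : ∀ x : Ω, stabilizer (zpowers z) x = ⊥ := by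
      intro x
      rw [eq_bot_iff]
      rintro ⟨h, hh⟩ hmem
      have hfix : h x = x := by
        simpa [Equiv.Perm.smul_def] using hmem
      have hone : h = 1 := by
        by_contra hne
        exact hsemi h hh hne x hfix
      exact Subgroup.mem_bot.mpr (Subtype.ext hone)
    have horbcard : ∀ x : Ω, Nat.card (orbit (zpowers z) x) = 3 * p := by
      intro x
      rw [Nat.card_congr (orbitEquivQuotientStabilizer (zpowers z) x), hstabH x,
        Nat.card_congr (QuotientGroup.quotientBot (G := (zpowers z : Subgroup (Equiv.Perm Ω)))).toEquiv,
        Nat.card_zpowers, hzord]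
    letI instQ : Fintype (Quotient (orbitRel (zpowers z : Subgroup (Equiv.Perm Ω)) Ω)) :=
      Fintype.ofFinite _
    letI instO : ∀ q : orbitRel.Quotient (zpowers z : Subgroup (Equiv.Perm Ω)) Ω,
        Fintype (orbit (zpowers z : Subgroup (Equiv.Perm Ω)) q.out) := fun _ => Fintype.ofFinite _
    have e := selfEquivSigmaOrbits (zpowers z : Subgroup (Equiv.Perm Ω)) Ω
    have hEq : Fintype.card Ω
        = Nat.card (Quotient (orbitRel (zpowers z : Subgroup (Equiv.Perm Ω)) Ω)) * (3 * p) := by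
      rw [Fintype.card_congr e, Fintype.card_sigma]
      have hsummand : ∀ q : orbitRel.Quotient (zpowers z : Subgroup (Equiv.Perm Ω)) Ω,
          Fintype.card (orbit (zpowers z : Subgroup (Equiv.Perm Ω)) q.out) = 3 * p := by
        intro q
        rw [← Nat.card_eq_fintype_card]
        exact horbcard _
      simp only [hsummand]
      rw [Finset.sum_const, Finset.card_univ, smul_eq_mul, Nat.card_eq_fintype_card]
    rw [hcard] at hEq
    have hpos : 0 < 3 * p := by positivity
    have h6 : 2 * (3 * p) = Nat.card (Quotient (orbitRel (zpowers z : Subgroup (Equiv.Perm Ω)) Ω)) * (3 * p) := by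
      omega
    exact (Nat.eq_of_mul_eq_mul_right hpos h6).symm
end

section
/- Every subgroup of index 102 in PSL(2,17) contains an element of order 4. -/
open Matrix

local notation "SL17" => Matrix.SpecialLinearGroup (Fin 2) (ZMod 17)
local notation "G17" => Matrix.ProjectiveSpecialLinearGroup (Fin 2) (ZMod 17)

instance : Fact (Nat.Prime 17) := ⟨by norm_num⟩
instance : Fact (Even (Fintype.card (Fin 2))) := ⟨by simp⟩


lemma SL17_sq_eq_one {X : SL17} (h : X * X = 1) : X = 1 ∨ X = -1 := by
  have hM : (X : Matrix (Fin 2) (Fin 2) (ZMod 17)) * X = 1 := by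
    rw [← Matrix.SpecialLinearGroup.coe_mul, h, Matrix.SpecialLinearGroup.coe_one]
  have hdet : Matrix.det (X : Matrix (Fin 2) (Fin 2) (ZMod 17)) = 1 := X.2
  set a := (X : Matrix (Fin 2) (Fin 2) (ZMod 17)) 0 0 with ha
  set b := (X : Matrix (Fin 2) (Fin 2) (ZMod 17)) 0 1 with hb
  set c := (X : Matrix (Fin 2) (Fin 2) (ZMod 17)) 1 0 with hc
  set d := (X : Matrix (Fin 2) (Fin 2) (ZMod 17)) 1 1 with hd
  rw [Matrix.eta_fin_two (X : Matrix (Fin 2) (Fin 2) (ZMod 17)), ← ha, ← hb, ← hc, ← hd] at hM hdet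
  rw [Matrix.det_fin_two_of] at hdet
  rw [Matrix.mul_fin_two, Matrix.one_fin_two] at hM
  have e00 : a * a + b * c = 1 := by have := congrFun (congrFun hM 0) 0; simpa using this
  have e01 : a * b + b * d = 0 := by have := congrFun (congrFun hM 0) 1; simpa using this
  have e10 : c * a + d * c = 0 := by have := congrFun (congrFun hM 1) 0; simpa using this
  have had : a + d ≠ 0 := by
    intro h0
    have hd' : d = -a := by linear_combination h0
    have : (2 : ZMod 17) = 0 := by
      rw [hd'] at hdet
      linear_combination -e00 - hdet
    exact absurd this (by decide)
  have hb0 : b = 0 := by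
    rcases mul_eq_zero.mp (show b * (a + d) = 0 by linear_combination e01) with h' | h'
    · exact h'
    · exact absurd h' had
  have hc0 : c = 0 := by
    rcases mul_eq_zero.mp (show c * (a + d) = 0 by linear_combination e10) with h' | h'
    · exact h'
    · exact absurd h' had
  have ha1 : a * a = 1 := by rw [hb0] at e00; linear_combination e00
  have hda : d = a := by
    have : a * d = 1 := by rw [hb0] at hdet; linear_combination hdet
    have h2 : a * (d - a) = 0 := by linear_combination this - ha1
    rcases mul_eq_zero.mp h2 with h' | h'
    · exfalso; rw [h'] at ha1; simp at ha1
    · linear_combination h'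
  rcases mul_self_eq_one_iff.mp ha1 with h1 | h1
  · left
    apply Subtype.ext
    rw [Matrix.eta_fin_two (X : Matrix (Fin 2) (Fin 2) (ZMod 17)), ← ha, ← hb, ← hc, ← hd,
      hb0, hc0, hda, h1]
    simp [Matrix.one_fin_two]
  · right
    apply Subtype.ext
    rw [Matrix.SpecialLinearGroup.coe_neg, Matrix.SpecialLinearGroup.coe_one,
      Matrix.eta_fin_two (X : Matrix (Fin 2) (Fin 2) (ZMod 17)), ← ha, ← hb, ← hc, ← hd,
      hb0, hc0, hda, h1, Matrix.one_fin_two]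
    simp

lemma SL17_mem_center_iff {Z : SL17} :
    Z ∈ Subgroup.center SL17 ↔ Z = 1 ∨ Z = -1 := by
  constructor
  · intro h
    obtain ⟨r, hr, hrZ⟩ := Matrix.SpecialLinearGroup.mem_center_iff.mp h
    have hr2 : r * r = 1 := by
      have : r ^ (Fintype.card (Fin 2)) = 1 := hr
      simpa [sq, pow_two, Fintype.card_fin] using this
    rcases mul_self_eq_one_iff.mp hr2 with h1 | h1
    · left; apply Subtype.ext
      rw [← hrZ, h1]
      simp [← Matrix.diagonal_one, ← Matrix.diagonal_neg]
    · right; apply Subtype.ext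
      rw [← hrZ, h1, Matrix.SpecialLinearGroup.coe_neg, Matrix.SpecialLinearGroup.coe_one]
      simp [← Matrix.diagonal_one, ← Matrix.diagonal_neg]
  · rintro (rfl | rfl)
    · exact (Subgroup.center SL17).one_mem
    · exact Subgroup.mem_center_iff.mpr fun g => by simp

lemma SL17_neg_one_mem_center : (-1 : SL17) ∈ Subgroup.center SL17 :=
  SL17_mem_center_iff.mpr (Or.inr rfl)

/-- mk of ±1 is 1 in PSL -/
lemma PSL17_mk_eq_one {X : SL17} (h : X = 1 ∨ X = -1) :
    (QuotientGroup.mk X : G17) = 1 :=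
  (QuotientGroup.eq_one_iff X).mpr (SL17_mem_center_iff.mpr h)

/-- sq of mk: if mk X has square one and mk X ≠ 1 then X * X = -1 -/
lemma SL17_lift_sq {X : SL17} (h1 : (QuotientGroup.mk X : G17) * QuotientGroup.mk X = 1)
    (h2 : (QuotientGroup.mk X : G17) ≠ 1) : X * X = -1 := by
  have : (QuotientGroup.mk (X * X) : G17) = 1 := by
    rw [QuotientGroup.mk_mul]; exact h1
  have hmem := (QuotientGroup.eq_one_iff (X * X)).mp this
  rcases SL17_mem_center_iff.mp hmem with h | h
  · exact absurd (PSL17_mk_eq_one (SL17_sq_eq_one h)) h2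
  · exact h

lemma SL17_lift_comm {X Y : SL17}
    (hc : (QuotientGroup.mk X : G17) * QuotientGroup.mk Y
        = QuotientGroup.mk Y * QuotientGroup.mk X)
    (hX : X * X = -1) (hY : Y * Y = -1)
    (hne : (QuotientGroup.mk X : G17) * QuotientGroup.mk Y ≠ 1) :
    Y * X = -(X * Y) := by
  have hq : (QuotientGroup.mk (X * Y) : G17) = QuotientGroup.mk (Y * X) := by
    rw [QuotientGroup.mk_mul, QuotientGroup.mk_mul]; exact hc
  have hmem : (X * Y)⁻¹ * (Y * X) ∈ Subgroup.center SL17 := QuotientGroup.eq.mp hq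
  rcases SL17_mem_center_iff.mp hmem with h | h
  · -- X*Y = Y*X ⇒ (XY)² = 1 ⇒ XY = ±1 ⇒ contradiction
    have hcomm : X * Y = Y * X := by
      have := congrArg (fun z => (X * Y) * z) h
      simpa [mul_assoc] using this.symm
    have hsq : (X * Y) * (X * Y) = 1 := by
      calc (X * Y) * (X * Y) = X * (Y * X) * Y := by group
        _ = X * (X * Y) * Y := by rw [hcomm]
        _ = (X * X) * (Y * Y) := by group
        _ = 1 := by rw [hX, hY]; simp
    exact absurd (by rw [← QuotientGroup.mk_mul]; exact PSL17_mk_eq_one (SL17_sq_eq_one hsq)) hne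
  · have := congrArg (fun z => (X * Y) * z) h
    simpa [mul_assoc] using this

lemma PSL17_no_klein (a b c : G17)
    (ha1 : a ≠ 1) (hb1 : b ≠ 1) (hc1 : c ≠ 1)
    (ha2 : a * a = 1) (hb2 : b * b = 1) (hc2 : c * c = 1)
    (hab : a * b = b * a) (hac : a * c = c * a) (hbc : b * c = c * b)
    (hab1 : a * b ≠ 1) (hac1 : a * c ≠ 1) (hbc1 : b * c ≠ 1)
    (habc1 : a * b * c ≠ 1) : False := by
  obtain ⟨A, rfl⟩ := QuotientGroup.mk_surjective a
  obtain ⟨B, rfl⟩ := QuotientGroup.mk_surjective b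
  obtain ⟨C, rfl⟩ := QuotientGroup.mk_surjective c
  have hA : A * A = -1 := SL17_lift_sq ha2 ha1
  have hB : B * B = -1 := SL17_lift_sq hb2 hb1
  have hC : C * C = -1 := SL17_lift_sq hc2 hc1
  have hBA : B * A = -(A * B) := SL17_lift_comm hab hA hB hab1
  have hCA : C * A = -(A * C) := SL17_lift_comm hac hA hC hac1
  have hCB : C * B = -(B * C) := SL17_lift_comm hbc hB hC hbc1
  -- derived rewrite rules
  have rA : ∀ x : SL17, A * (A * x) = -x := fun x => by
    rw [← mul_assoc, hA]; simp
  have rB : ∀ x : SL17, B * (B * x) = -x := fun x => by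
    rw [← mul_assoc, hB]; simp
  have rC : ∀ x : SL17, C * (C * x) = -x := fun x => by
    rw [← mul_assoc, hC]; simp
  have rBA : ∀ x : SL17, B * (A * x) = -(A * (B * x)) := fun x => by
    rw [← mul_assoc, hBA]; simp [mul_assoc]
  have rCA : ∀ x : SL17, C * (A * x) = -(A * (C * x)) := fun x => by
    rw [← mul_assoc, hCA]; simp [mul_assoc]
  have rCB : ∀ x : SL17, C * (B * x) = -(B * (C * x)) := fun x => by
    rw [← mul_assoc, hCB]; simp [mul_assoc]
  have key : (A * B * C) * (A * B * C) = 1 := by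
    simp [mul_assoc, mul_neg, neg_mul, neg_neg, rCA, rBA, rCB, rA, rB, rC, hA, hB, hC]
  have : (QuotientGroup.mk (A * B * C) : G17) = 1 := PSL17_mk_eq_one (SL17_sq_eq_one key)
  rw [QuotientGroup.mk_mul, QuotientGroup.mk_mul] at this
  exact habc1 this

/-- SL(2,17) is equivalent to the kernel of det on GL(2,17) -/
noncomputable def SL17equivKer :
    SL17 ≃ (Matrix.GeneralLinearGroup.det (n := Fin 2) (R := ZMod 17)).ker where
  toFun A := ⟨Matrix.SpecialLinearGroup.toGL A, by
    simp [MonoidHom.mem_ker]⟩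
  invFun g := ⟨(g.1 : Matrix (Fin 2) (Fin 2) (ZMod 17)), by
    have := g.2
    rw [MonoidHom.mem_ker] at this
    have := congrArg Units.val this
    simpa using this⟩
  left_inv A := by ext; rfl
  right_inv g := by ext : 2; rfl

lemma SL17_det_surjective :
    Function.Surjective (Matrix.GeneralLinearGroup.det (n := Fin 2) (R := ZMod 17)) := by
  intro u
  have hv : (![(↑u : ZMod 17), 1] * ![(↑(u⁻¹) : ZMod 17), 1]) = 1 := by
    funext i
    fin_cases i
    · show (↑u : ZMod 17) * ↑(u⁻¹) = 1
      exact Units.mul_inv u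
    · show (1 : ZMod 17) * 1 = 1
      rw [one_mul]
  have hv' : (![(↑(u⁻¹) : ZMod 17), 1] * ![(↑u : ZMod 17), 1]) = 1 := by
    funext i
    fin_cases i
    · show (↑(u⁻¹) : ZMod 17) * ↑u = 1
      exact Units.inv_mul u
    · show (1 : ZMod 17) * 1 = 1
      rw [one_mul]
  refine ⟨⟨Matrix.diagonal ![(↑u : ZMod 17), 1], Matrix.diagonal ![(↑(u⁻¹) : ZMod 17), 1],
    ?_, ?_⟩, ?_⟩
  · rw [Matrix.diagonal_mul_diagonal, show (fun i => ![(↑u : ZMod 17), 1] i * ![(↑(u⁻¹) : ZMod 17), 1] i) = 1 from hv]; exact Matrix.diagonal_one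
  · rw [Matrix.diagonal_mul_diagonal, show (fun i => ![(↑(u⁻¹) : ZMod 17), 1] i * ![(↑u : ZMod 17), 1] i) = 1 from hv']; exact Matrix.diagonal_one
  · apply Units.ext
    rw [Matrix.GeneralLinearGroup.val_det_apply]
    show Matrix.det (Matrix.diagonal ![(↑u : ZMod 17), 1]) = ↑u
    rw [Matrix.det_diagonal, Fin.prod_univ_two]
    show (↑u : ZMod 17) * 1 = ↑u
    rw [mul_one]

lemma card_SL17 : Nat.card SL17 = 4896 := by
  have hGL : Nat.card (GL (Fin 2) (ZMod 17)) = 78336 := by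
    rw [Matrix.card_GL_field]
    simp [Fin.prod_univ_two, ZMod.card]
  have hunits : Nat.card (ZMod 17)ˣ = 16 := by
    rw [Nat.card_eq_fintype_card, ZMod.card_units_eq_totient]
    decide
  have h1 : Nat.card (GL (Fin 2) (ZMod 17)) =
      Nat.card (GL (Fin 2) (ZMod 17) ⧸ (Matrix.GeneralLinearGroup.det
        (n := Fin 2) (R := ZMod 17)).ker) *
      Nat.card (Matrix.GeneralLinearGroup.det (n := Fin 2) (R := ZMod 17)).ker :=
    Subgroup.card_eq_card_quotient_mul_card_subgroup _
  have h2 : Nat.card (GL (Fin 2) (ZMod 17) ⧸ (Matrix.GeneralLinearGroup.det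
        (n := Fin 2) (R := ZMod 17)).ker) = 16 := by
    rw [Nat.card_congr (QuotientGroup.quotientKerEquivOfSurjective _
      SL17_det_surjective).toEquiv]
    exact hunits
  rw [Nat.card_congr SL17equivKer]
  rw [hGL, h2] at h1
  omega

lemma card_center_SL17 : Nat.card (Subgroup.center SL17) = 2 := by
  have hne : (-1 : SL17) ≠ 1 := by
    intro h
    have := congrArg (fun g : SL17 => (g : Matrix (Fin 2) (Fin 2) (ZMod 17)) 0 0) h
    simp [Matrix.SpecialLinearGroup.coe_neg] at this
    exact absurd this (by decide)
  have hz : Subgroup.center SL17 = Subgroup.zpowers (-1 : SL17) := by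
    apply le_antisymm
    · intro z hz
      rcases SL17_mem_center_iff.mp hz with rfl | rfl
      · exact Subgroup.one_mem _
      · exact Subgroup.mem_zpowers _
    · rw [Subgroup.zpowers_le]
      exact SL17_mem_center_iff.mpr (Or.inr rfl)
  rw [hz, Nat.card_zpowers]
  rw [orderOf_eq_prime (by rw [pow_two, neg_one_mul, neg_neg]) hne]

lemma card_G17 : Nat.card G17 = 2448 := by
  have h := Subgroup.card_eq_card_quotient_mul_card_subgroup (Subgroup.center SL17)
  rw [card_SL17, card_center_SL17] at h
  have : Nat.card G17 = Nat.card (SL17 ⧸ Subgroup.center SL17) := rfl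
  omega

/-- Every subgroup of index `102` in `PSL(2,17)` contains an
element of order `4`. -/
theorem PSL2_17_index_102_subgroup_has_order_four_element
    (H : Subgroup (Matrix.ProjectiveSpecialLinearGroup (Fin 2) (ZMod 17)))
    (hH : H.index = 102) :
    ∃ x : H, orderOf x = 4 := by
  haveI : Finite G17 := Nat.finite_of_card_ne_zero (by rw [card_G17]; norm_num)
  have hcardH : Nat.card H = 24 := by
    have h := Subgroup.card_mul_index H
    rw [hH, card_G17] at h
    omega
  by_contra hcon
  push_neg at hcon
  obtain ⟨P⟩ : Nonempty (Sylow 2 H) := inferInstance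
  have hcardP : Nat.card (P : Subgroup H) = 8 := by
    rw [Sylow.card_eq_multiplicity, hcardH]
    have h3 : (24 : ℕ).factorization 2 = 3 := by
      rw [show (24 : ℕ) = 2 ^ 3 * 3 by norm_num,
        Nat.factorization_mul (by norm_num) (by norm_num)]
      rw [Nat.Prime.factorization_pow (by norm_num)]
      rw [Nat.Prime.factorization (by norm_num)]
      simp
    rw [h3]
    norm_num
  -- no element of order 4 in P, so exponent 2
  have hexp : ∀ x : (P : Subgroup H), x * x = 1 := by
    intro x
    by_contra hx
    have hdvd : orderOf x ∣ 2 ^ 3 := by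
      have h8 := orderOf_dvd_natCard x
      rw [hcardP] at h8
      exact (by norm_num : (8 : ℕ) = 2 ^ 3) ▸ h8
    obtain ⟨k, hk, hke⟩ := (Nat.dvd_prime_pow Nat.prime_two).mp hdvd
    have hk4 : k = 0 ∨ k = 1 ∨ k = 2 ∨ k = 3 := by omega
    rcases hk4 with rfl | rfl | rfl | rfl
    · exact hx (by rw [← pow_two, orderOf_dvd_iff_pow_eq_one.mp (by rw [hke]; norm_num)])
    · exact hx (by rw [← pow_two, orderOf_dvd_iff_pow_eq_one.mp (by rw [hke]; norm_num)])
    · exact hcon (x : H) (by rw [Subgroup.orderOf_coe, hke]; norm_num)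
    · refine hcon ((x ^ 2 : (P : Subgroup H)) : H) ?_
      rw [Subgroup.orderOf_coe, orderOf_pow, hke]
      norm_num
  have hinv : ∀ x : (P : Subgroup H), x⁻¹ = x := fun x =>
    inv_eq_of_mul_eq_one_left (hexp x)
  have hcomm : ∀ x y : (P : Subgroup H), x * y = y * x := by
    intro x y
    calc x * y = (x * y)⁻¹ := (inv_eq_of_mul_eq_one_left (hexp _)).symm
      _ = y⁻¹ * x⁻¹ := mul_inv_rev _ _
      _ = y * x := by rw [hinv, hinv]
  -- pick three independent elements
  haveI : Nontrivial (P : Subgroup H) := by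
    rw [← Finite.one_lt_card_iff_nontrivial, hcardP]; norm_num
  obtain ⟨a, ha⟩ := exists_ne (1 : (P : Subgroup H))
  have hb : ∃ b : (P : Subgroup H), b ∉ ({1, a} : Set (P : Subgroup H)) := by
    by_contra hb
    push_neg at hb
    have : (Set.univ : Set (P : Subgroup H)).ncard ≤ ({1, a} : Set (P : Subgroup H)).ncard :=
      Set.ncard_le_ncard (fun x _ => hb x) (Set.toFinite _)
    rw [Set.ncard_univ, hcardP] at this
    have h2 : ({1, a} : Set (P : Subgroup H)).ncard ≤ 2 :=
      (Set.ncard_insert_le _ _).trans (by rw [Set.ncard_singleton])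
    omega
  obtain ⟨b, hbmem⟩ := hb
  have hc : ∃ c : (P : Subgroup H), c ∉ ({1, a, b, a * b} : Set (P : Subgroup H)) := by
    by_contra hc
    push_neg at hc
    have : (Set.univ : Set (P : Subgroup H)).ncard ≤
        ({1, a, b, a * b} : Set (P : Subgroup H)).ncard :=
      Set.ncard_le_ncard (fun x _ => hc x) (Set.toFinite _)
    rw [Set.ncard_univ, hcardP] at this
    have h4 : ({1, a, b, a * b} : Set (P : Subgroup H)).ncard ≤ 4 :=
      (Set.ncard_insert_le _ _).trans (by
        have := (Set.ncard_insert_le a ({b, a * b} : Set (P : Subgroup H)))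
        have := (Set.ncard_insert_le b ({a * b} : Set (P : Subgroup H)))
        have := Set.ncard_singleton (a * b)
        omega)
    omega
  obtain ⟨c, hcmem⟩ := hc
  simp only [Set.mem_insert_iff, Set.mem_singleton_iff, not_or] at hbmem hcmem
  obtain ⟨hb1, hba⟩ := hbmem
  obtain ⟨hc1, hca, hcb, hcab⟩ := hcmem
  -- map into G17
  set f : (P : Subgroup H) →* G17 := H.subtype.comp (P : Subgroup H).subtype with hf
  have hfinj : Function.Injective f :=
    Subtype.coe_injective.comp Subtype.coe_injective
  have hfe : ∀ x : (P : Subgroup H), f x = 1 ↔ x = 1 := fun x => map_eq_one_iff f hfinj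
  refine PSL17_no_klein (f a) (f b) (f c) ?_ ?_ ?_ ?_ ?_ ?_ ?_ ?_ ?_ ?_ ?_ ?_ ?_
  · exact fun h => ha ((hfe a).mp h)
  · exact fun h => hb1 ((hfe b).mp h)
  · exact fun h => hc1 ((hfe c).mp h)
  · rw [← _root_.map_mul, hexp a, _root_.map_one]
  · rw [← _root_.map_mul, hexp b, _root_.map_one]
  · rw [← _root_.map_mul, hexp c, _root_.map_one]
  · rw [← _root_.map_mul, ← _root_.map_mul, hcomm a b]
  · rw [← _root_.map_mul, ← _root_.map_mul, hcomm a c]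
  · rw [← _root_.map_mul, ← _root_.map_mul, hcomm b c]
  · rw [← _root_.map_mul, Ne, hfe]
    intro h
    exact hba ((eq_inv_of_mul_eq_one_right h).trans (hinv a))
  · rw [← _root_.map_mul, Ne, hfe]
    intro h
    exact hca ((eq_inv_of_mul_eq_one_right h).trans (hinv a))
  · rw [← _root_.map_mul, Ne, hfe]
    intro h
    exact hcb ((eq_inv_of_mul_eq_one_right h).trans (hinv b))
  · rw [← _root_.map_mul, ← _root_.map_mul, Ne, hfe]
    intro h
    exact hcab ((eq_inv_of_mul_eq_one_right h).trans (hinv (a * b)))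
end

section
/- Let F be the Frobenius group of order 3p (p prime, p ≡ 1 mod 3), and let S = {x, x⁻¹, y, y⁻¹} ⊆ F be a generating set where x and y have different orders. Then Aut(F,S) = {α ∈ Aut(F) : S^α = S} contains no element of order 3 and no element of order 4; hence Aut(F,S) is trivial, or isomorphic to Z₂ or Z₂ × Z₂. -/
/-- `Aut(G,S)`: the group of automorphisms of `G` preserving the subset `S`,
as a subgroup of `MulAut G`. -/
def autGS (G : Type*) [Group G] (S : Set G) : Subgroup (MulAut G) where
  carrier := {α | ⇑α '' S = S}
  one_mem' := by simp
  mul_mem' := by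
    intro a b ha hb
    have h : ⇑(a * b) = ⇑a ∘ ⇑b := rfl
    show ⇑(a * b) '' S = S
    rw [h, Set.image_comp, hb, ha]
  inv_mem' := by
    intro a ha
    show ⇑a⁻¹ '' S = S
    conv_lhs => rw [← ha, ← Set.image_comp]
    have h : ⇑a⁻¹ ∘ ⇑a = id := funext fun x => a.toEquiv.symm_apply_apply x
    rw [h, Set.image_id]

private lemma exponent_eq_two_aux {G : Type*} [Group G]
    (h : ∀ g : G, g ^ 2 = 1) (hnt : Nat.card G ≠ 1) : Monoid.exponent G = 2 := by
  have hd := Monoid.exponent_dvd_of_forall_pow_eq_one h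
  rcases (Nat.dvd_prime Nat.prime_two).1 hd with h1 | h2
  · exfalso
    apply hnt
    have : Subsingleton G := ⟨fun a b => by
      have ha := Monoid.pow_exponent_eq_one a
      have hb := Monoid.pow_exponent_eq_one b
      rw [h1, pow_one] at ha hb
      rw [ha, hb]⟩
    exact Nat.card_eq_one_iff_unique.2 ⟨this, ⟨1⟩⟩
  · exact h2

instance : IsKleinFour (Multiplicative (ZMod 2) × Multiplicative (ZMod 2)) where
  card_four := by simp [Nat.card_prod]
  exponent_two := exponent_eq_two_aux (by decide) (by simp [Nat.card_prod])

/-- Let `F` be the Frobenius group of order `3p` (the nonabelian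
group of order `3p`, `p ≡ 1 (mod 3)` prime), and let `S = {x, x⁻¹, y, y⁻¹}` be a
generating set of `F` where `x` and `y` have different orders.  Then `Aut(F,S)`
has no element of order `3` and no element of order `4`; hence it is trivial, or
isomorphic to `ℤ₂` or to `ℤ₂ × ℤ₂`. -/
theorem autGS_of_frobenius_3p
    (F : Type*) [Group F] [Finite F] {p : ℕ} (hp : p.Prime) (hp3 : p % 3 = 1)
    (hcard : Nat.card F = 3 * p) (hnab : ∃ a b : F, a * b ≠ b * a)
    (x y : F) (hxy : orderOf x ≠ orderOf y)
    (hgen : Subgroup.closure ({x, x⁻¹, y, y⁻¹} : Set F) = ⊤) :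
    (∀ α ∈ autGS F ({x, x⁻¹, y, y⁻¹} : Set F), orderOf α ≠ 3 ∧ orderOf α ≠ 4) ∧
      (Nat.card (autGS F ({x, x⁻¹, y, y⁻¹} : Set F)) = 1 ∨
        Nonempty ((autGS F ({x, x⁻¹, y, y⁻¹} : Set F)) ≃* Multiplicative (ZMod 2)) ∨
        Nonempty ((autGS F ({x, x⁻¹, y, y⁻¹} : Set F)) ≃*
          Multiplicative (ZMod 2) × Multiplicative (ZMod 2))) := by
  classical
  have hFinAut : Finite (MulAut F) :=
    Finite.of_injective (fun e : MulAut F => (e : F → F)) DFunLike.coe_injective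
  set S : Set F := {x, x⁻¹, y, y⁻¹} with hS
  set H := autGS F S with hH
  -- Every automorphism in H sends x to x or x⁻¹, and y to y or y⁻¹.
  have key : ∀ α ∈ H, (α x = x ∨ α x = x⁻¹) ∧ (α y = y ∨ α y = y⁻¹) := by
    intro α hα
    have him : ⇑α '' S = S := hα
    have hmem : ∀ g ∈ S, α g ∈ S := fun g hg => him ▸ Set.mem_image_of_mem _ hg
    have hordx : orderOf (α x) = orderOf x := orderOf_injective α.toMonoidHom α.injective x
    have hordy : orderOf (α y) = orderOf y := orderOf_injective α.toMonoidHom α.injective y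
    constructor
    · have := hmem x (by simp [hS])
      simp only [hS, Set.mem_insert_iff, Set.mem_singleton_iff] at this
      rcases this with h | h | h | h
      · exact Or.inl h
      · exact Or.inr h
      · exact absurd (by rw [← hordx, h]) hxy
      · exact absurd (by rw [← hordx, h, orderOf_inv]) hxy
    · have := hmem y (by simp [hS])
      simp only [hS, Set.mem_insert_iff, Set.mem_singleton_iff] at this
      rcases this with h | h | h | h
      · exact absurd (by rw [← hordy, h]) (Ne.symm hxy)
      · exact absurd (by rw [← hordy, h, orderOf_inv]) (Ne.symm hxy)
      · exact Or.inl h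
      · exact Or.inr h
  -- Every element of H squares to the identity.
  have hsq : ∀ α ∈ H, α * α = 1 := by
    intro α hα
    obtain ⟨hx, hy⟩ := key α hα
    have hxx : α (α x) = x := by rcases hx with h | h <;> rw [h] <;> simp [h]
    have hyy : α (α y) = y := by rcases hy with h | h <;> rw [h] <;> simp [h]
    have heq : ((α * α : MulAut F) : F →* F) = MonoidHom.id F := by
      apply MonoidHom.eq_of_eqOn_dense hgen
      intro g hg
      simp only [hS, Set.mem_insert_iff, Set.mem_singleton_iff] at hg
      rcases hg with rfl | rfl | rfl | rfl
      · exact hxx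
      · show α (α x⁻¹) = x⁻¹; rw [map_inv, map_inv, hxx]
      · exact hyy
      · show α (α y⁻¹) = y⁻¹; rw [map_inv, map_inv, hyy]
    exact MulEquiv.toMonoidHom_injective heq
  have hsq' : ∀ β : H, β ^ 2 = 1 := fun β =>
    Subtype.ext (by rw [pow_two]; exact hsq β.1 β.2)
  refine ⟨?_, ?_⟩
  · intro α hα
    have hdvd : orderOf α ∣ 2 := orderOf_dvd_of_pow_eq_one (by rw [pow_two]; exact hsq α hα)
    have hle : orderOf α ≤ 2 := Nat.le_of_dvd two_pos hdvd
    omega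
  -- H injects into Bool × Bool, so |H| ≤ 4.
  have hinj : Function.Injective
      (fun β : H => (decide (β.1 x = x), decide (β.1 y = y))) := by
    intro a b hab
    simp only [Prod.mk.injEq, decide_eq_decide] at hab
    have hax : a.1 x = b.1 x := by
      by_cases h : a.1 x = x
      · rw [h, hab.1.mp h]
      · rw [(key a.1 a.2).1.resolve_left h,
          (key b.1 b.2).1.resolve_left (fun hb => h (hab.1.mpr hb))]
    have hay : a.1 y = b.1 y := by
      by_cases h : a.1 y = y
      · rw [h, hab.2.mp h]
      · rw [(key a.1 a.2).2.resolve_left h,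
          (key b.1 b.2).2.resolve_left (fun hb => h (hab.2.mpr hb))]
    have heq : (a.1 : F →* F) = (b.1 : F →* F) := by
      apply MonoidHom.eq_of_eqOn_dense hgen
      intro g hg
      simp only [hS, Set.mem_insert_iff, Set.mem_singleton_iff] at hg
      rcases hg with rfl | rfl | rfl | rfl
      · exact hax
      · show a.1 x⁻¹ = b.1 x⁻¹; rw [map_inv, map_inv, hax]
      · exact hay
      · show a.1 y⁻¹ = b.1 y⁻¹; rw [map_inv, map_inv, hay]
    exact Subtype.ext (MulEquiv.toMonoidHom_injective heq)
  have hle4 : Nat.card H ≤ 4 := by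
    have := Nat.card_le_card_of_injective _ hinj
    simpa using this
  have hpos : 0 < Nat.card H := Nat.card_pos
  -- rule out card = 3
  have hne3 : Nat.card H ≠ 3 := by
    intro h3
    haveI : Fact (Nat.Prime 3) := ⟨by norm_num⟩
    obtain ⟨g, hg⟩ := exists_prime_orderOf_dvd_card' (G := H) 3 (by rw [h3])
    have : orderOf g ∣ 2 := orderOf_dvd_of_pow_eq_one (hsq' g)
    rw [hg] at this
    omega
  interval_cases hc : Nat.card H
  · exact Or.inl rfl
  · refine Or.inr (Or.inl ⟨?_⟩)
    haveI : Fact (Nat.Prime 2) := ⟨Nat.prime_two⟩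
    exact mulEquivOfPrimeCardEq hc (by simp)
  · exact absurd rfl hne3
  · refine Or.inr (Or.inr ⟨?_⟩)
    haveI : IsKleinFour H := ⟨hc, exponent_eq_two_aux hsq' (by omega)⟩
    exact IsKleinFour.nonempty_mulEquiv.some
end
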